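/- If a group G has a central subgroup of finite index, then the commutator subgroup of G is finite. -/

import Mathlib

theorem commutator_finite_of_central_finite_index {G : Type*} [Group G]
    (H : Subgroup G) (hcentral : H ≤ Subgroup.center G) (hindex : H.FiniteIndex) :
    Finite (commutator G) := by
  have : Finite (G ⧸ H) := H.finite_quotient_of_finiteIndex
  have key : ∀ (g : G), ∃ z ∈ Subgroup.center G,
      (QuotientGroup.mk g : G ⧸ H).out = g * z := by
    intro g
    have h : (QuotientGroup.mk g : G ⧸ H)
        = QuotientGroup.mk ((QuotientGroup.mk g : G ⧸ H).out) :=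
      (QuotientGroup.out_eq' _).symm
    rw [QuotientGroup.eq] at h
    exact ⟨g⁻¹ * (QuotientGroup.mk g : G ⧸ H).out, hcentral h, by group⟩
  open scoped commutatorElement in
  have hfin : Finite (commutatorSet G) := by
    have hsurj : ∀ c ∈ commutatorSet G, ∃ p : (G ⧸ H) × (G ⧸ H),
        ⁅p.1.out, p.2.out⁆ = c := by
      rintro c ⟨g₁, g₂, rfl⟩
      refine ⟨(QuotientGroup.mk g₁, QuotientGroup.mk g₂), ?_⟩
      obtain ⟨z₁, hz₁, e₁⟩ := key g₁
      obtain ⟨z₂, hz₂, e₂⟩ := key g₂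
      rw [Subgroup.mem_center_iff] at hz₁ hz₂
      have hz₁' : ∀ g : G, g * z₁⁻¹ = z₁⁻¹ * g := fun g =>
        ((Commute.inv_right (hz₁ g : Commute g z₁)) : _)
      simp only [e₁, e₂, commutatorElement_def, mul_inv_rev, mul_assoc]
      rw [← mul_assoc z₂ z₁⁻¹, hz₁' z₂, mul_assoc,
        ← mul_assoc g₂ z₁⁻¹, hz₁' g₂, mul_assoc, mul_inv_cancel_left,
        ← mul_assoc z₂ g₁⁻¹, ← hz₂ g₁⁻¹, mul_assoc, mul_inv_cancel_left]
    have hsub : commutatorSet G ⊆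
        Set.range (fun p : (G ⧸ H) × (G ⧸ H) => ⁅p.1.out, p.2.out⁆) := by
      intro c hc
      obtain ⟨p, hp⟩ := hsurj c hc
      exact ⟨p, hp⟩
    exact Finite.Set.subset _ hsub
  infer_instance
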